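/- Let D be a connected finite graph and H a nested set on D with |H| = |V(D)| - 1 (i.e. of dimension 1). Then H has a unique unsaturated element B, and the set of uncovered vertices of B consists of exactly two vertices α_1, α_2. Setting B_1 = the connected component of B\{α_2} containing α_1 and B_2 = the connected component of B\{α_1} containing α_2, the only two maximal nested sets containing H are H ∪ {B_1} and H ∪ {B_2}. -/

import Mathlib

open scoped Classical

section NestedSets

variable {V : Type*} [Fintype V] [DecidableEq V]

/-- The (induced subgraph on the) finite vertex set `B` is connected (in particular nonempty). -/
def Conn (G : SimpleGraph V) (B : Finset V) : Prop :=
  (G.induce (B : Set V)).Connected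

/-- Two vertex sets are orthogonal: no edge of `G` joins a vertex of one to a vertex
of the other. -/
def Orth (G : SimpleGraph V) (B C : Finset V) : Prop :=
  ∀ a ∈ B, ∀ b ∈ C, ¬ G.Adj a b

/-- Two subdiagrams are compatible if one contains the other or they are orthogonal. -/
def Compat (G : SimpleGraph V) (B C : Finset V) : Prop :=
  B ⊆ C ∨ C ⊆ B ∨ Orth G B C

/-- A nested set on the (connected) diagram `D` with vertex set `V`: a collection of
pairwise compatible connected subdiagrams containing `D` itself. -/
def Nested (G : SimpleGraph V) (H : Finset (Finset V)) : Prop :=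
  Finset.univ ∈ H ∧ (∀ B ∈ H, Conn G B) ∧ ∀ B ∈ H, ∀ C ∈ H, Compat G B C

/-- `iN H B` is the union of the elements of `H` strictly contained in `B`;
this coincides with the union of the *maximal* elements of `H` strictly contained in `B`. -/
noncomputable def iN (H : Finset (Finset V)) (B : Finset V) : Finset V :=
  (H.filter fun C => C ⊂ B).sup id

/-- `nN H B = n(B;H)` is the number of vertices of `B` not covered by the maximal
elements of `H` strictly contained in `B`. -/
noncomputable def nN (H : Finset (Finset V)) (B : Finset V) : ℕ :=
  (B \ iN H B).card

/-- `C` is a connected component of (the induced subgraph on) `S`. -/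
def IsCC (G : SimpleGraph V) (S C : Finset V) : Prop :=
  C ⊆ S ∧ Conn G C ∧ ∀ C', C ⊆ C' → C' ⊆ S → Conn G C' → C' = C

/-- A maximal nested set on `D`. -/
def MaxNested (G : SimpleGraph V) (F : Finset (Finset V)) : Prop :=
  Nested G F ∧ ∀ K, Nested G K → F ⊆ K → K = F

end NestedSets


section Aux
variable {V : Type*} [Fintype V] [DecidableEq V] {G : SimpleGraph V}

/-- reachability within a vertex set -/
def Rch (G : SimpleGraph V) (S : Finset V) (x y : V) : Prop :=
  ∃ hx : x ∈ (S : Set V), ∃ hy : y ∈ (S : Set V), (G.induce (S : Set V)).Reachable ⟨x, hx⟩ ⟨y, hy⟩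

lemma rch_mono {S T : Finset V} (hST : S ⊆ T) {x y : V} (h : Rch G S x y) : Rch G T x y := by
  obtain ⟨hx, hy, hr⟩ := h
  exact ⟨hST hx, hST hy, by exact hr.map (G.induceHomOfLE (by exact_mod_cast hST)).toHom⟩

lemma rch_symm {S : Finset V} {x y : V} (h : Rch G S x y) : Rch G S y x := by
  obtain ⟨hx, hy, hr⟩ := h; exact ⟨hy, hx, hr.symm⟩

lemma rch_trans {S : Finset V} {x y z : V} (h : Rch G S x y) (h' : Rch G S y z) : Rch G S x z := by
  obtain ⟨hx, hy, hr⟩ := h; obtain ⟨hy', hz, hr'⟩ := h'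
  exact ⟨hx, hz, hr.trans hr'⟩

lemma rch_of_adj {S : Finset V} {x y : V} (hx : x ∈ S) (hy : y ∈ S) (h : G.Adj x y) :
    Rch G S x y :=
  ⟨hx, hy, SimpleGraph.Adj.reachable (by simpa using h)⟩

lemma rch_refl {S : Finset V} {x : V} (hx : x ∈ S) : Rch G S x x := ⟨hx, hx, .refl _⟩

lemma conn_iff {B : Finset V} : Conn G B ↔ B.Nonempty ∧ ∀ x ∈ B, ∀ y ∈ B, Rch G B x y := by
  constructor
  · intro h
    refine ⟨?_, fun x hx y hy => ⟨hx, hy, h.preconnected _ _⟩⟩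
    obtain ⟨⟨x, hx⟩⟩ := h.nonempty
    exact ⟨x, by simpa using hx⟩
  · rintro ⟨⟨x₀, hx₀⟩, h⟩
    show (G.induce (B : Set V)).Connected
    rw [SimpleGraph.connected_iff]
    refine ⟨?_, ⟨⟨x₀, by simpa using hx₀⟩⟩⟩
    rintro ⟨x, hx⟩ ⟨y, hy⟩
    obtain ⟨_, _, hr⟩ := h x (by simpa using hx) y (by simpa using hy)
    exact hr

lemma conn_singleton (a : V) : Conn G {a} := by
  rw [conn_iff]
  refine ⟨⟨a, by simp⟩, ?_⟩
  intro x hx y hy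
  simp only [Finset.mem_singleton] at hx hy
  subst hx; subst hy; exact rch_refl (by simp)

lemma conn_nonempty {B : Finset V} (h : Conn G B) : B.Nonempty := (conn_iff.mp h).1

lemma walk_cross {S C : Finset V} {a b : (S : Set V)} (p : (G.induce (S:Set V)).Walk a b)
    (ha : (a:V) ∈ C) (hb : (b:V) ∉ C) :
    ∃ u ∈ C, ∃ v ∈ S, v ∉ C ∧ G.Adj u v := by
  induction p with
  | nil => exact absurd ha hb
  | @cons u v w h p ih =>
    by_cases hv : (v:V) ∈ C
    · exact ih hv hb
    · exact ⟨u, ha, v, by simpa using v.2, hv, by simpa using h⟩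

lemma frontier_edge {B C : Finset V} (hB : Conn G B) (hCB : C ⊆ B)
    {x y : V} (hx : x ∈ C) (hy : y ∈ B) (hyC : y ∉ C) :
    ∃ u ∈ C, ∃ v ∈ B, v ∉ C ∧ G.Adj u v := by
  obtain ⟨_, rch⟩ := conn_iff.mp hB
  obtain ⟨hx', hy', hr⟩ := rch x (hCB hx) y hy
  obtain ⟨p⟩ := hr
  exact walk_cross p hx hyC

lemma conn_union {A C : Finset V} (hA : Conn G A) (hC : Conn G C)
    {a c : V} (ha : a ∈ A) (hc : c ∈ C) (hac : Rch G (A ∪ C) a c) :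
    Conn G (A ∪ C) := by
  rw [conn_iff]
  obtain ⟨_, rA⟩ := conn_iff.mp hA
  obtain ⟨_, rC⟩ := conn_iff.mp hC
  refine ⟨⟨a, by simp [ha]⟩, ?_⟩
  have key : ∀ x ∈ A ∪ C, Rch G (A ∪ C) x a := by
    intro x hx
    rcases Finset.mem_union.mp hx with h | h
    · exact rch_mono Finset.subset_union_left (rA x h a ha)
    · exact rch_trans (rch_mono Finset.subset_union_right (rC x h c hc)) (rch_symm hac)
  intro x hx y hy
  exact rch_trans (key x hx) (rch_symm (key y hy))

lemma conn_union_of_adj {A C : Finset V} (hA : Conn G A) (hC : Conn G C)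
    {a c : V} (ha : a ∈ A) (hc : c ∈ C) (h : G.Adj a c) : Conn G (A ∪ C) :=
  conn_union hA hC ha hc (rch_of_adj (by simp [ha]) (by simp [hc]) h)

lemma conn_union_of_mem {A C : Finset V} (hA : Conn G A) (hC : Conn G C)
    {a : V} (ha : a ∈ A) (hc : a ∈ C) : Conn G (A ∪ C) :=
  conn_union hA hC ha hc (rch_refl (by simp [ha]))

lemma orth_symm {B C : Finset V} (h : Orth G B C) : Orth G C B :=
  fun a ha b hb hadj => h b hb a ha hadj.symm

lemma compat_symm {B C : Finset V} (h : Compat G B C) : Compat G C B := by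
  rcases h with h | h | h
  · exact Or.inr (Or.inl h)
  · exact Or.inl h
  · exact Or.inr (Or.inr (orth_symm h))

lemma compat_self (B : Finset V) : Compat G B B := Or.inl Finset.Subset.rfl

lemma mem_iN {H : Finset (Finset V)} {B : Finset V} {v : V} :
    v ∈ iN H B ↔ ∃ C ∈ H, C ⊂ B ∧ v ∈ C := by
  unfold iN
  simp only [Finset.mem_sup, Finset.mem_filter, id]
  tauto

lemma iN_subset (H : Finset (Finset V)) (B : Finset V) : iN H B ⊆ B := by
  intro v hv
  obtain ⟨C, hC, hCB, hvC⟩ := mem_iN.mp hv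
  exact hCB.subset hvC

lemma subset_iN {H : Finset (Finset V)} {B C : Finset V} (hC : C ∈ H) (h : C ⊂ B) :
    C ⊆ iN H B := fun v hv => mem_iN.mpr ⟨C, hC, h, hv⟩

lemma one_le_nN {K : Finset (Finset V)} (hK : Nested G K) {B : Finset V} (hB : B ∈ K) :
    1 ≤ nN K B := by
  rw [nN, Nat.one_le_iff_ne_zero, Ne, Finset.card_eq_zero, ← Ne,
    ← Finset.nonempty_iff_ne_empty]
  by_contra hempty
  rw [Finset.not_nonempty_iff_eq_empty, Finset.sdiff_eq_empty_iff_subset] at hempty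
  have hBconn := hK.2.1 B hB
  set F := K.filter (fun C => C ⊂ B) with hF
  rcases Finset.eq_empty_or_nonempty F with hFe | hFne
  · have : iN K B = ∅ := by rw [iN, ← hF, hFe]; simp
    rw [this] at hempty
    exact absurd (Finset.subset_empty.mp hempty) (conn_nonempty hBconn).ne_empty
  · obtain ⟨C, hCF, hmax⟩ : ∃ C ∈ F, ∀ C' ∈ F, ¬ C < C' :=
      let ⟨C, hC⟩ := Finset.exists_maximal hFne; ⟨C, hC.prop, fun _ h => hC.not_gt h⟩
    obtain ⟨hCK, hCB⟩ := Finset.mem_filter.mp hCF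
    obtain ⟨y, hyB, hyC⟩ := Finset.exists_of_ssubset hCB
    obtain ⟨x, hxC⟩ := conn_nonempty (hK.2.1 C hCK)
    obtain ⟨u, huC, v, hvB, hvC, hadj⟩ := frontier_edge hBconn hCB.subset hxC hyB hyC
    obtain ⟨C', hC'K, hC'B, hvC'⟩ := mem_iN.mp (hempty hvB)
    rcases hK.2.2 C hCK C' hC'K with h | h | h
    · exact hmax C' (Finset.mem_filter.mpr ⟨hC'K, hC'B⟩)
        (lt_of_le_of_ne h (fun he => hvC (he ▸ hvC')))
    · exact hvC (h hvC')
    · exact h u huC v hvC' hadj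

lemma exists_adj_of_mem {B : Finset V} (hB : Conn G B) {v u : V} (hv : v ∈ B) (hu : u ∈ B)
    (hne : u ≠ v) : ∃ w ∈ B, G.Adj v w := by
  obtain ⟨u', hu', w, hwB, hwv, hadj⟩ :=
    frontier_edge hB (C := {v}) (Finset.singleton_subset_iff.mpr hv)
      (Finset.mem_singleton_self v) hu (by simpa using hne)
  rw [Finset.mem_singleton] at hu'
  exact ⟨w, hwB, hu' ▸ hadj⟩

lemma diff_disjoint {K : Finset (Finset V)} (hK : Nested G K) {B B' : Finset V}
    (hB : B ∈ K) (hB' : B' ∈ K) (hne : B ≠ B') :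
    Disjoint (B \ iN K B) (B' \ iN K B') := by
  rw [Finset.disjoint_left]
  intro v hv hv'
  obtain ⟨hvB, hviN⟩ := Finset.mem_sdiff.mp hv
  obtain ⟨hvB', hviN'⟩ := Finset.mem_sdiff.mp hv'
  have hsub : ∀ {X Y : Finset V}, X ∈ K → Y ∈ K → X ⊆ Y → X ≠ Y → v ∈ X → v ∉ iN K Y → False :=
    fun hX hY hXY hXYne hvX hviNY =>
      hviNY (subset_iN hX (lt_of_le_of_ne hXY hXYne) hvX)
  rcases hK.2.2 B hB B' hB' with h | h | h
  · exact hsub hB hB' h hne hvB hviN'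
  · exact hsub hB' hB h (Ne.symm hne) hvB' hviN
  · by_cases hsing : B = {v}
    · exact hsub hB hB' (by rw [hsing]; simpa using hvB') hne hvB hviN'
    · have hex : ∃ u ∈ B, u ≠ v := by
        by_contra hno
        push_neg at hno
        exact hsing (Finset.eq_singleton_iff_unique_mem.mpr ⟨hvB, hno⟩)
      obtain ⟨u, huB, hune⟩ := hex
      obtain ⟨w, hwB, hadj⟩ := exists_adj_of_mem (hK.2.1 B hB) hvB huB hune
      exact h w hwB v hvB' hadj.symm

lemma sum_nN {K : Finset (Finset V)} (hK : Nested G K) :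
    ∑ B ∈ K, nN K B = Fintype.card V := by
  have cover : Finset.univ = K.biUnion (fun B => B \ iN K B) := by
    apply Finset.ext
    intro v
    simp only [Finset.mem_univ, true_iff, Finset.mem_biUnion]
    have hne : (K.filter (fun B => v ∈ B)).Nonempty :=
      ⟨Finset.univ, Finset.mem_filter.mpr ⟨hK.1, Finset.mem_univ v⟩⟩
    obtain ⟨B, hBf, hmin⟩ : ∃ B ∈ K.filter (fun B => v ∈ B), ∀ C ∈ K.filter (fun B => v ∈ B), ¬ C < B :=
      let ⟨B, hB⟩ := Finset.exists_minimal hne; ⟨B, hB.prop, fun _ h => hB.not_lt h⟩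
    obtain ⟨hBK, hvB⟩ := Finset.mem_filter.mp hBf
    refine ⟨B, hBK, Finset.mem_sdiff.mpr ⟨hvB, ?_⟩⟩
    intro hviN
    obtain ⟨C, hCK, hCB, hvC⟩ := mem_iN.mp hviN
    exact hmin C (Finset.mem_filter.mpr ⟨hCK, hvC⟩) hCB
  calc (∑ B ∈ K, nN K B) = (K.biUnion (fun B => B \ iN K B)).card :=
        (Finset.card_biUnion (fun B hB B' hB' hne => diff_disjoint hK hB hB' hne)).symm
    _ = Fintype.card V := by rw [← cover, Finset.card_univ]

lemma nested_card_le {K : Finset (Finset V)} (hK : Nested G K) :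
    K.card ≤ Fintype.card V := by
  rw [← sum_nN hK]
  calc K.card = ∑ _B ∈ K, 1 := by simp
    _ ≤ ∑ B ∈ K, nN K B := Finset.sum_le_sum fun B hB => one_le_nN hK hB

lemma maxNested_of_card {K : Finset (Finset V)} (hK : Nested G K)
    (h : K.card = Fintype.card V) : MaxNested G K :=
  ⟨hK, fun K' hK' hsub =>
    (Finset.eq_of_subset_of_card_le hsub (by rw [h]; exact nested_card_le hK')).symm⟩

lemma exists_cc {S : Finset V} {a : V} (ha : a ∈ S) :
    ∃ C, IsCC G S C ∧ a ∈ C := by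
  classical
  set T := S.powerset.filter (fun C => a ∈ C ∧ Conn G C) with hT
  have hmem : ({a} : Finset V) ∈ T := by
    simp [hT, Finset.mem_powerset, Finset.singleton_subset_iff, ha, conn_singleton]
  obtain ⟨C, hC, hmaxim⟩ := T.exists_max_image Finset.card ⟨_, hmem⟩
  rw [hT, Finset.mem_filter, Finset.mem_powerset] at hC
  obtain ⟨hCS, haC, hCconn⟩ := hC
  refine ⟨C, ⟨hCS, hCconn, ?_⟩, haC⟩
  intro C' hCC' hC'S hC'conn
  have hC'T : C' ∈ T := by
    rw [hT, Finset.mem_filter, Finset.mem_powerset]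
    exact ⟨hC'S, hCC' haC, hC'conn⟩
  exact (Finset.eq_of_subset_of_card_le hCC' (hmaxim C' hC'T)).symm

lemma nested_insert {H : Finset (Finset V)} (hH : Nested G H) {X : Finset V}
    (hconn : Conn G X) (hcompat : ∀ C ∈ H, Compat G X C) : Nested G (insert X H) := by
  refine ⟨Finset.mem_insert_of_mem hH.1, ?_, ?_⟩
  · intro B hB
    rcases Finset.mem_insert.mp hB with rfl | hB
    · exact hconn
    · exact hH.2.1 B hB
  · intro B hB C hC
    rcases Finset.mem_insert.mp hB with rfl | hB'
    · rcases Finset.mem_insert.mp hC with rfl | hC'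
      · exact compat_self _
      · exact hcompat C hC'
    · rcases Finset.mem_insert.mp hC with rfl | hC'
      · exact compat_symm (hcompat B hB')
      · exact hH.2.2 B hB' C hC'

lemma compat_cc {H : Finset (Finset V)} (hH : Nested G H) {B : Finset V} (hB : B ∈ H)
    {a : V} (ha : a ∈ B \ iN H B) {C₀ : Finset V} (hcc : IsCC G (B.erase a) C₀) :
    ∀ C ∈ H, Compat G C₀ C := by
  intro C hC
  obtain ⟨hsub, hconn, hmaxim⟩ := hcc
  have hC₀B : C₀ ⊆ B := hsub.trans (Finset.erase_subset _ _)
  rcases hH.2.2 C hC B hB with h | h | h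
  · rcases eq_or_ne C B with rfl | hne
    · exact Or.inl hC₀B
    · have hCiN : C ⊆ iN H B := subset_iN hC (lt_of_le_of_ne h hne)
      have haC : a ∉ C := fun h' => (Finset.mem_sdiff.mp ha).2 (hCiN h')
      have hCS : C ⊆ B.erase a := fun x hx =>
        Finset.mem_erase.mpr ⟨fun h'' => haC (h'' ▸ hx), h hx⟩
      by_cases horth : Orth G C₀ C
      · exact Or.inr (Or.inr horth)
      · rw [Orth] at horth
        push_neg at horth
        obtain ⟨u, hu, v, hv, hadj⟩ := horth
        have hun : Conn G (C₀ ∪ C) := conn_union_of_adj hconn (hH.2.1 C hC) hu hv hadj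
        have heq := hmaxim (C₀ ∪ C) Finset.subset_union_left
          (Finset.union_subset hsub hCS) hun
        exact Or.inr (Or.inl (fun x hx => heq ▸ Finset.mem_union_right _ hx))
  · exact Or.inl (hC₀B.trans h)
  · exact Or.inr (Or.inr (fun x hx y hy hadj => h y hy x (hC₀B hx) hadj.symm))

lemma cc_not_mem {H : Finset (Finset V)} {B : Finset V} (hB : B ∈ H)
    {a a' : V} (ha : a ∈ B \ iN H B) (ha' : a' ∈ B \ iN H B)
    {C₀ : Finset V} (hcc : IsCC G (B.erase a') C₀) (haC : a ∈ C₀) : C₀ ∉ H := by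
  intro hmem
  have ha'B : a' ∈ B := (Finset.mem_sdiff.mp ha').1
  have hC₀B : C₀ ⊂ B := by
    refine Finset.ssubset_iff_of_subset (hcc.1.trans (Finset.erase_subset _ _)) |>.mpr
      ⟨a', ha'B, fun h => (Finset.mem_erase.mp (hcc.1 h)).1 rfl⟩
  exact (Finset.mem_sdiff.mp ha).2 (subset_iN hmem hC₀B haC)

lemma max_of_cc {H : Finset (Finset V)} (hH : Nested G H)
    (hcard : H.card + 1 = Fintype.card V)
    {B : Finset V} (hB : B ∈ H) {a a' : V} (ha : a ∈ B \ iN H B) (ha' : a' ∈ B \ iN H B)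
    {C₀ : Finset V} (hcc : IsCC G (B.erase a') C₀) (haC : a ∈ C₀) :
    MaxNested G (insert C₀ H) := by
  apply maxNested_of_card (nested_insert hH hcc.2.1 (compat_cc hH hB ha' hcc))
  rw [Finset.card_insert_of_notMem (cc_not_mem hB ha ha' hcc haC), hcard]

lemma eq_cc {H : Finset (Finset V)} (hH : Nested G H)
    (hcard : H.card + 1 = Fintype.card V)
    {B : Finset V} (hB : B ∈ H) {a a' : V} (ha : a ∈ B \ iN H B) (ha' : a' ∈ B \ iN H B)
    {C₀ : Finset V} (hcc : IsCC G (B.erase a') C₀) (haC : a ∈ C₀)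
    {X : Finset V} (hXH : X ∉ H) (hK : Nested G (insert X H))
    (haX : a ∈ X) (ha'X : a' ∉ X) (hXB : X ⊆ B) : X = C₀ := by
  have hXconn : Conn G X := hK.2.1 X (Finset.mem_insert_self _ _)
  have hXS : X ⊆ B.erase a' := fun x hx =>
    Finset.mem_erase.mpr ⟨fun h => ha'X (h ▸ hx), hXB hx⟩
  have hun : Conn G (X ∪ C₀) := conn_union_of_mem hXconn hcc.2.1 haX haC
  have hXC : X ⊆ C₀ := by
    have heq := hcc.2.2 (X ∪ C₀) Finset.subset_union_right
      (Finset.union_subset hXS hcc.1) hun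
    exact fun x hx => heq ▸ Finset.mem_union_left _ hx
  by_contra hne
  have hcompat : ∀ C ∈ insert X H, Compat G C₀ C := by
    intro C hC
    rcases Finset.mem_insert.mp hC with rfl | hC
    · exact Or.inr (Or.inl hXC)
    · exact compat_cc hH hB ha' hcc C hC
  have hnested : Nested G (insert C₀ (insert X H)) := nested_insert hK hcc.2.1 hcompat
  have hC₀K : C₀ ∉ insert X H := by
    rw [Finset.mem_insert]
    push_neg
    exact ⟨fun h => hne h.symm, cc_not_mem hB ha ha' hcc haC⟩
  have hle := nested_card_le hnested
  rw [Finset.card_insert_of_notMem hC₀K, Finset.card_insert_of_notMem hXH] at hle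
  omega

end Aux

/-- A nested set `H` of dimension 1 (`|H| = |V(D)| - 1`) has a unique
unsaturated element `B`, whose uncovered vertex set consists of exactly two vertices
`a₁ ≠ a₂`; with `B₁` the connected component of `B \ {a₂}` containing `a₁` and `B₂`
the connected component of `B \ {a₁}` containing `a₂`, the only two maximal nested
sets containing `H` are `H ∪ {B₁}` and `H ∪ {B₂}`. -/
theorem stmt8 {V : Type*} [Fintype V] [DecidableEq V]
    (Gr : SimpleGraph V) (hGr : Gr.Connected)
    (H : Finset (Finset V)) (hH : Nested Gr H) (hcard : H.card + 1 = Fintype.card V) :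
    ∃ B ∈ H, ∃ a₁ a₂ : V, ∃ B₁ B₂ : Finset V,
      2 ≤ nN H B ∧ (∀ B' ∈ H, 2 ≤ nN H B' → B' = B) ∧
      a₁ ≠ a₂ ∧ B \ iN H B = {a₁, a₂} ∧
      (IsCC Gr (B.erase a₂) B₁ ∧ a₁ ∈ B₁) ∧
      (IsCC Gr (B.erase a₁) B₂ ∧ a₂ ∈ B₂) ∧
      MaxNested Gr (insert B₁ H) ∧ MaxNested Gr (insert B₂ H) ∧
      insert B₁ H ≠ insert B₂ H ∧
      (∀ K : Finset (Finset V), MaxNested Gr K → H ⊆ K →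
        K = insert B₁ H ∨ K = insert B₂ H) := by
  classical
  have hone : ∀ B' ∈ H, 1 ≤ nN H B' := fun B' hB' => one_le_nN hH hB'
  have hsum : ∑ B' ∈ H, nN H B' = Fintype.card V := sum_nN hH
  have hsum1 : ∑ B' ∈ H, (nN H B' - 1) = 1 := by
    have h1 : ∑ B' ∈ H, nN H B' = ∑ B' ∈ H, ((nN H B' - 1) + 1) :=
      Finset.sum_congr rfl (fun B' hB' => by have := hone B' hB'; omega)
    rw [Finset.sum_add_distrib, Finset.sum_const, smul_eq_mul, mul_one] at h1
    omega
  obtain ⟨B, hB, hBne⟩ : ∃ B ∈ H, nN H B - 1 ≠ 0 :=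
    Finset.exists_ne_zero_of_sum_ne_zero (by rw [hsum1]; exact one_ne_zero)
  have hsplit : nN H B - 1 + ∑ B' ∈ H.erase B, (nN H B' - 1) = ∑ B' ∈ H, (nN H B' - 1) :=
    Finset.add_sum_erase H (fun B' => nN H B' - 1) hB
  have hrest : ∑ B' ∈ H.erase B, (nN H B' - 1) = 0 := by omega
  have hB2 : nN H B = 2 := by have := hone B hB; omega
  have huniq : ∀ B' ∈ H, 2 ≤ nN H B' → B' = B := by
    intro B' hB' h2
    by_contra hne
    have h0 : nN H B' - 1 = 0 :=
      (Finset.sum_eq_zero_iff.mp hrest) B' (Finset.mem_erase.mpr ⟨hne, hB'⟩)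
    omega
  have hBcard : (B \ iN H B).card = 2 := hB2
  obtain ⟨a₁, a₂, hne, hset⟩ := Finset.card_eq_two.mp hBcard
  have ha₁ : a₁ ∈ B \ iN H B := by rw [hset]; simp
  have ha₂ : a₂ ∈ B \ iN H B := by rw [hset]; simp
  have ha₁B : a₁ ∈ B := (Finset.mem_sdiff.mp ha₁).1
  have ha₂B : a₂ ∈ B := (Finset.mem_sdiff.mp ha₂).1
  obtain ⟨B₁, hccB₁, ha₁B₁⟩ := exists_cc (G := Gr) (Finset.mem_erase.mpr ⟨hne, ha₁B⟩)
  obtain ⟨B₂, hccB₂, ha₂B₂⟩ := exists_cc (G := Gr) (Finset.mem_erase.mpr ⟨Ne.symm hne, ha₂B⟩)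
  have hmax₁ : MaxNested Gr (insert B₁ H) := max_of_cc hH hcard hB ha₁ ha₂ hccB₁ ha₁B₁
  have hmax₂ : MaxNested Gr (insert B₂ H) := max_of_cc hH hcard hB ha₂ ha₁ hccB₂ ha₂B₂
  have hB₁H : B₁ ∉ H := cc_not_mem hB ha₁ ha₂ hccB₁ ha₁B₁
  have hB₂H : B₂ ∉ H := cc_not_mem hB ha₂ ha₁ hccB₂ ha₂B₂
  have hB₁B₂ : B₁ ≠ B₂ := by
    intro h
    have h2 : a₂ ∉ B₁ := fun hm => (Finset.mem_erase.mp (hccB₁.1 hm)).1 rfl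
    exact h2 (h ▸ ha₂B₂)
  refine ⟨B, hB, a₁, a₂, B₁, B₂, by omega, huniq, hne, hset, ⟨hccB₁, ha₁B₁⟩,
    ⟨hccB₂, ha₂B₂⟩, hmax₁, hmax₂, ?_, ?_⟩
  · intro h
    have hmem : B₁ ∈ insert B₂ H := h ▸ Finset.mem_insert_self _ _
    rcases Finset.mem_insert.mp hmem with h' | h'
    · exact hB₁B₂ h'
    · exact hB₁H h'
  · intro K hKmax hHK
    have hKn := hKmax.1
    have hKle := nested_card_le hKn
    have hKneH : K ≠ H := by
      rintro rfl
      have heq := hKmax.2 (insert B₁ K) hmax₁.1 (Finset.subset_insert _ _)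
      exact hB₁H (by rw [← heq]; exact Finset.mem_insert_self _ _)
    have hKcard : K.card = Fintype.card V := by
      have h1 : H.card ≤ K.card := Finset.card_le_card hHK
      have h2 : H.card ≠ K.card := fun h =>
        hKneH (Finset.eq_of_subset_of_card_le hHK h.ge).symm
      omega
    have hsd : (K \ H).card = 1 := by rw [Finset.card_sdiff_of_subset hHK]; omega
    obtain ⟨X, hX⟩ := Finset.card_eq_one.mp hsd
    have hXK : X ∈ K := (Finset.mem_sdiff.mp (hX ▸ Finset.mem_singleton_self X)).1
    have hXH : X ∉ H := (Finset.mem_sdiff.mp (hX ▸ Finset.mem_singleton_self X)).2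
    have hKeq : K = insert X H := by
      have h1 := Finset.sdiff_union_of_subset hHK
      rw [hX] at h1
      rw [Finset.insert_eq, ← h1]
    have hKnested : Nested Gr (insert X H) := hKeq ▸ hKn
    have hsumK : ∑ C ∈ K, nN K C = Fintype.card V := sum_nN hKn
    have hallone : ∀ C ∈ K, nN K C = 1 := by
      intro C hC
      by_contra hne2
      have h2 : 2 ≤ nN K C := by have := one_le_nN hKn hC; omega
      have h3 : nN K C + ∑ C' ∈ K.erase C, nN K C' = ∑ C' ∈ K, nN K C' :=
        Finset.add_sum_erase K (fun C' => nN K C') hC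
      have h4 : (K.erase C).card ≤ ∑ C' ∈ K.erase C, nN K C' := by
        calc (K.erase C).card = ∑ _C' ∈ K.erase C, 1 := by simp
          _ ≤ ∑ C' ∈ K.erase C, nN K C' :=
            Finset.sum_le_sum fun C' hC' => one_le_nN hKn (Finset.mem_of_mem_erase hC')
      have h5 : (K.erase C).card = K.card - 1 := Finset.card_erase_of_mem hC
      have h6 : 1 ≤ K.card := Finset.card_pos.mpr ⟨C, hC⟩
      omega
    have hnNB1 : nN K B = 1 := hallone B (hHK hB)
    have hXB : X ⊂ B := by
      by_contra hnot
      have hiN : iN K B = iN H B := by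
        simp only [hKeq, iN, Finset.filter_insert, if_neg hnot]
      rw [nN, hiN] at hnNB1
      rw [nN] at hB2
      omega
    have hiNK : iN K B = X ∪ iN H B := by
      simp only [hKeq, iN, Finset.filter_insert, if_pos hXB, Finset.sup_insert, id_eq,
        Finset.sup_eq_union]
    have hdiffX : B \ iN K B = ({a₁, a₂} : Finset V) \ X := by
      ext v
      have hv := Finset.ext_iff.mp hset v
      simp only [Finset.mem_sdiff, Finset.mem_insert, Finset.mem_singleton] at hv
      simp only [Finset.mem_sdiff, hiNK, Finset.mem_union, Finset.mem_insert,
        Finset.mem_singleton]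
      tauto
    have hcard1 : (({a₁, a₂} : Finset V) \ X).card = 1 := by
      rw [← hdiffX]
      exact hnNB1
    by_cases h1 : a₁ ∈ X
    · have h2 : a₂ ∉ X := by
        intro h2
        have hemp : ({a₁, a₂} : Finset V) \ X = ∅ :=
          Finset.sdiff_eq_empty_iff_subset.mpr
            (Finset.insert_subset_iff.mpr ⟨h1, Finset.singleton_subset_iff.mpr h2⟩)
        rw [hemp] at hcard1
        simp at hcard1
      left
      have hXB₁ := eq_cc hH hcard hB ha₁ ha₂ hccB₁ ha₁B₁ hXH hKnested h1 h2 hXB.subset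
      rw [hKeq, hXB₁]
    · have h2 : a₂ ∈ X := by
        by_contra h2
        have hsub : ({a₁, a₂} : Finset V) ⊆ ({a₁, a₂} : Finset V) \ X := by
          intro v hv
          refine Finset.mem_sdiff.mpr ⟨hv, ?_⟩
          rcases Finset.mem_insert.mp hv with rfl | hv'
          · exact h1
          · rw [Finset.mem_singleton] at hv'
            subst hv'
            exact h2
        have hle2 := Finset.card_le_card hsub
        rw [hcard1, Finset.card_pair hne] at hle2
        omega
      right
      have hXB₂ := eq_cc hH hcard hB ha₂ ha₁ hccB₂ ha₂B₂ hXH hKnested h2 h1 hXB.subset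
      rw [hKeq, hXB₂]
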